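/- arXiv:1501.04344 — 2 statements merged into one kernel-verified Lean document; each statement's English description precedes it below -/
import Mathlib

section
/- For every n > 3, the set F(n,0) of maps Z₂ⁿ → Z₂ⁿ defined by reversible circuits with n wires is exactly the set of even permutations of Z₂ⁿ; equivalently, the subgroup of the symmetric group on Z₂ⁿ generated by the gates of Ω²_n is the alternating group A(Z₂ⁿ). -/
/-- Boolean vectors of length `n` over `Z₂`. -/
abbrev Bvec (n : ℕ) := Fin n → ZMod 2

/-- A reversible gate on `n` wires: NOT, CNOT (control `i`, target `j`),
or 2-CNOT (unordered pair of controls `c`, target `j`). -/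
inductive RGate (n : ℕ) : Type
  | NOT (j : Fin n) : RGate n
  | CNOT (i j : Fin n) (h : i ≠ j) : RGate n
  | TOF (c : Sym2 (Fin n)) (j : Fin n) (hc : ¬ c.IsDiag) (hj : j ∉ c) : RGate n

/-- The transformation of `Z₂ⁿ` computed by a gate. -/
def RGate.apply {n : ℕ} : RGate n → Bvec n → Bvec n
  | RGate.NOT j, x => Function.update x j (x j + 1)
  | RGate.CNOT i j _, x => Function.update x j (x j + x i)
  | RGate.TOF c j _ _, x =>
      Function.update x j (x j + Sym2.lift ⟨fun a b => x a * x b, fun _ _ => mul_comm _ _⟩ c)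

/-- A reversible circuit on `n` wires: a finite list of gates. -/
abbrev Circuit (n : ℕ) := List (RGate n)

/-- The transformation defined by a circuit: the composition of its gates in order. -/
def Circuit.eval {n : ℕ} (S : Circuit n) (x : Bvec n) : Bvec n :=
  S.foldl (fun v g => g.apply v) x

/-- The support of a gate: its target wire together with its control wires. -/
def RGate.support {n : ℕ} : RGate n → Set (Fin n)
  | RGate.NOT j => {j}
  | RGate.CNOT i j _ => {i, j}
  | RGate.TOF c j _ _ => {a | a = j ∨ a ∈ c}

/-- A circuit has depth 1 iff it is nonempty and its gates have pairwise disjoint supports. -/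
def DepthOne {n : ℕ} (S : Circuit n) : Prop :=
  S ≠ [] ∧ S.Pairwise fun g₁ g₂ => Disjoint g₁.support g₂.support

/-- The depth of a circuit: the minimal number of consecutive depth-1 sublists
into which it can be split (the empty circuit has depth 0). -/
noncomputable def Circuit.depth {n : ℕ} (S : Circuit n) : ℕ :=
  sInf {d | ∃ P : List (Circuit n), P.flatten = S ∧ (∀ T ∈ P, DepthOne T) ∧ P.length = d}

/-- Extend an input vector `x ∈ Z₂ⁿ` by `q` zero values. -/
def extendInput (n q : ℕ) (x : Bvec n) : Bvec (n + q) :=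
  fun k => if h : (k : ℕ) < n then x ⟨k, h⟩ else 0

/-- A circuit `S` with `n+q` wires realizes `f : Z₂ⁿ → Z₂ⁿ` using `q` additional inputs. -/
def Realizes (n q : ℕ) (S : Circuit (n + q)) (f : Bvec n → Bvec n) : Prop :=
  ∃ π : Fin n → Fin (n + q), Function.Injective π ∧
    ∀ (x : Bvec n) (i : Fin n), Circuit.eval S (extendInput n q x) (π i) = f x i

/-- `F(n,q)`: the maps `Z₂ⁿ → Z₂ⁿ` realizable by circuits with `n+q` wires. -/
def FSet (n q : ℕ) : Set (Bvec n → Bvec n) :=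
  {f | ∃ S : Circuit (n + q), Realizes n q S f}

/-- `L(f,q)`: minimal complexity of a circuit with `n+q` wires realizing `f`. -/
noncomputable def Lmin (n q : ℕ) (f : Bvec n → Bvec n) : ℕ :=
  sInf {l | ∃ S : Circuit (n + q), Realizes n q S f ∧ S.length = l}

/-- `D(f,q)`: minimal depth of a circuit with `n+q` wires realizing `f`. -/
noncomputable def Dmin (n q : ℕ) (f : Bvec n → Bvec n) : ℕ :=
  sInf {d | ∃ S : Circuit (n + q), Realizes n q S f ∧ Circuit.depth S = d}

/-- The Shannon complexity function `L(n,q)`. -/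
noncomputable def ShannonL (n q : ℕ) : ℕ := sSup (Lmin n q '' FSet n q)

/-- The Shannon depth function `D(n,q)`. -/
noncomputable def ShannonD (n q : ℕ) : ℕ := sSup (Dmin n q '' FSet n q)

/-- A circuit `S` with `n` wires defines `f` (no additional inputs). -/
def Defines {n : ℕ} (S : Circuit n) (f : Bvec n → Bvec n) : Prop :=
  ∀ x, Circuit.eval S x = f x

/-- `F(n,0)`: maps defined by circuits with `n` wires. -/
def FSet0 (n : ℕ) : Set (Bvec n → Bvec n) :=
  {f | ∃ S : Circuit n, Defines S f}

/-- `D(f,0)`: minimal depth of a circuit with `n` wires defining `f`. -/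
noncomputable def Dmin0 (n : ℕ) (f : Bvec n → Bvec n) : ℕ :=
  sInf {d | ∃ S : Circuit n, Defines S f ∧ Circuit.depth S = d}

/-- The Shannon depth function `D(n,0)` for circuits without additional inputs. -/
noncomputable def ShannonD0 (n : ℕ) : ℕ := sSup (Dmin0 n '' FSet0 n)

section Aux
open Equiv Equiv.Perm Finset

lemma z2 : ∀ a : ZMod 2, a = 0 ∨ a = 1 := by decide

lemma z2_add_self : ∀ a : ZMod 2, a + a = 0 := by decide

variable {n : ℕ}

lemma bv_add_self (x : Bvec n) : x + x = 0 := by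
  funext i; exact z2_add_self (x i)

/-- basis vector -/
def bv (j : Fin n) : Bvec n := Pi.single j 1

@[simp] lemma bv_same (j : Fin n) : bv j j = 1 := Pi.single_eq_same j 1

@[simp] lemma bv_ne {i j : Fin n} (h : i ≠ j) : bv j i = 0 := Pi.single_eq_of_ne h 1

lemma bv_nonzero (j : Fin n) : bv j ≠ 0 := by
  intro h
  have := congrFun h j
  simp at this

lemma bv_add_bv_nonzero {j f : Fin n} (h : j ≠ f) : bv j + bv f ≠ 0 := by
  intro hh
  have := congrFun hh j
  rw [Pi.add_apply, bv_same, bv_ne h] at this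
  simp at this

lemma ne_add_of_ne_zero {x : Bvec n} {u : Bvec n} (hu : u ≠ 0) : x ≠ x + u := by
  intro h
  apply hu
  have : x + u = x + 0 := by rw [← h, add_zero]
  exact add_left_cancel this

/-- The "add `g x` to coordinate `j`" function. -/
def addFun (j : Fin n) (g : Bvec n → ZMod 2) (x : Bvec n) : Bvec n :=
  Function.update x j (x j + g x)

/-- `g` does not depend on coordinate `j`. -/
def Indep (j : Fin n) (g : Bvec n → ZMod 2) : Prop :=
  ∀ x c, g (Function.update x j c) = g x

lemma addFun_apply_self (j : Fin n) (g) (x : Bvec n) : addFun j g x j = x j + g x :=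
  Function.update_self j _ x

lemma addFun_apply_ne (j : Fin n) (g) (x : Bvec n) {i : Fin n} (h : i ≠ j) :
    addFun j g x i = x i := Function.update_of_ne h _ x

lemma indep_addFun {j : Fin n} {g} (hg : Indep j g) (g' : Bvec n → ZMod 2) (x : Bvec n) :
    g (addFun j g' x) = g x := hg x _

lemma addFun_invol {j : Fin n} {g} (hg : Indep j g) (x : Bvec n) :
    addFun j g (addFun j g x) = x := by
  unfold addFun
  rw [Function.update_idem]
  rw [Function.update_self]
  have hgx : g (Function.update x j (x j + g x)) = g x := hg x _
  rw [hgx, add_assoc, z2_add_self, add_zero, Function.update_eq_self]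

end Aux
section Aux2
open Equiv Equiv.Perm Finset

variable {n : ℕ}

/-- The permutation adding `g x` (independent of coordinate `j`) to coordinate `j`. -/
def addPerm (j : Fin n) (g : Bvec n → ZMod 2) (hg : Indep j g) : Equiv.Perm (Bvec n) :=
  ⟨addFun j g, addFun j g, addFun_invol hg, addFun_invol hg⟩

@[simp] lemma addPerm_coe (j : Fin n) (g) (hg : Indep j g) :
    ⇑(addPerm j g hg) = addFun j g := rfl

lemma addPerm_apply_eq_add (j : Fin n) (g) (hg : Indep j g) (x : Bvec n) :
    addPerm j g hg x = x + Pi.single j (g x) := by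
  show addFun j g x = _
  funext i
  by_cases h : i = j
  · subst h; rw [addFun_apply_self, Pi.add_apply, Pi.single_eq_same]
  · rw [addFun_apply_ne _ _ _ h, Pi.add_apply, Pi.single_eq_of_ne h, add_zero]

lemma addPerm_congr (j : Fin n) (g g') (hg : Indep j g) (hg' : Indep j g')
    (h : ∀ x, g x = g' x) : addPerm j g hg = addPerm j g' hg' := by
  apply Equiv.ext; intro x
  show addFun j g x = addFun j g' x
  unfold addFun; rw [h x]

lemma addPerm_mul (j : Fin n) (g g') (hg : Indep j g) (hg' : Indep j g') :
    addPerm j g hg * addPerm j g' hg' =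
      addPerm j (fun x => g x + g' x) (show Indep j (fun x => g x + g' x) from fun x c => by simp only []; rw [hg, hg']) := by
  apply Equiv.ext; intro x
  show addFun j g (addFun j g' x) = addFun j (fun x => g x + g' x) x
  unfold addFun
  rw [Function.update_idem, Function.update_self]
  have : g (Function.update x j (x j + g' x)) = g x := hg x _
  rw [this]
  simp only []
  rw [add_assoc, add_comm (g' x) (g x)]

lemma addPerm_invol (j : Fin n) (g) (hg : Indep j g) :
    addPerm j g hg * addPerm j g hg = 1 := by
  apply Equiv.ext; intro x
  exact addFun_invol hg x

lemma addPerm_inv (j : Fin n) (g) (hg : Indep j g) :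
    (addPerm j g hg)⁻¹ = addPerm j g hg := by
  rw [eq_comm, eq_inv_iff_mul_eq_one, addPerm_invol]

/-- The gate generator set. -/
def Gates (n : ℕ) : Set (Equiv.Perm (Bvec n)) := {σ | ∃ g : RGate n, ⇑σ = g.apply}

/-- The subgroup generated by the gates. -/
def GG (n : ℕ) : Subgroup (Equiv.Perm (Bvec n)) := Subgroup.closure (Gates n)

lemma indep_one (j : Fin n) : Indep j (fun _ => (1 : ZMod 2)) := fun _ _ => rfl

lemma indep_coord {i j : Fin n} (h : i ≠ j) : Indep j (fun x => x i) :=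
  fun x c => Function.update_of_ne h c x

lemma indep_mul {j : Fin n} {g g'} (hg : Indep j g) (hg' : Indep j g') :
    Indep j (fun x => g x * g' x) := fun x c => by simp only []; rw [hg, hg']

def notPerm (j : Fin n) : Equiv.Perm (Bvec n) := addPerm j (fun _ => 1) (indep_one j)

def cnotPerm (i j : Fin n) (h : i ≠ j) : Equiv.Perm (Bvec n) :=
  addPerm j (fun x => x i) (indep_coord h)

def tofPerm (i₁ i₂ j : Fin n) (h₁ : i₁ ≠ j) (h₂ : i₂ ≠ j) : Equiv.Perm (Bvec n) :=
  addPerm j (fun x => x i₁ * x i₂) (indep_mul (indep_coord h₁) (indep_coord h₂))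

lemma notPerm_mem (j : Fin n) : notPerm j ∈ GG n :=
  Subgroup.subset_closure ⟨RGate.NOT j, rfl⟩

lemma cnotPerm_mem (i j : Fin n) (h : i ≠ j) : cnotPerm i j h ∈ GG n :=
  Subgroup.subset_closure ⟨RGate.CNOT i j h, rfl⟩

lemma tofPerm_mem (i₁ i₂ j : Fin n) (h12 : i₁ ≠ i₂) (h₁ : i₁ ≠ j) (h₂ : i₂ ≠ j) :
    tofPerm i₁ i₂ j h₁ h₂ ∈ GG n := by
  refine Subgroup.subset_closure ⟨RGate.TOF s(i₁, i₂) j ?_ ?_, ?_⟩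
  · rw [Sym2.mk_isDiag_iff]; exact h12
  · rw [Sym2.mem_iff]; rintro (rfl | rfl)
    · exact h₁ rfl
    · exact h₂ rfl
  · funext x
    show addFun j (fun x => x i₁ * x i₂) x = _
    simp only [RGate.apply, Sym2.lift_mk]
    rfl

end Aux2
section Aux3
open Equiv Equiv.Perm Finset

variable {n : ℕ}

lemma indep_add {j : Fin n} {g g'} (hg : Indep j g) (hg' : Indep j g') :
    Indep j (fun x => g x + g' x) := fun x c => by simp only []; rw [hg, hg']

lemma indep_const (j : Fin n) (c₀ : ZMod 2) : Indep j (fun _ => c₀) := fun _ _ => rfl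

lemma addFun_update_comm {m j : Fin n} (hmj : m ≠ j) (c₀ : ZMod 2) (x : Bvec n)
    (c : ZMod 2) :
    addFun m (fun _ => c₀) (Function.update x j c) =
      Function.update (addFun m (fun _ => c₀) x) j c := by
  funext i
  rcases eq_or_ne i m with rfl | him
  · rw [addFun_apply_self, Function.update_of_ne hmj, Function.update_of_ne hmj,
      addFun_apply_self]
  · rw [addFun_apply_ne _ _ _ him]
    rcases eq_or_ne i j with rfl | hij
    · rw [Function.update_self, Function.update_self]
    · rw [Function.update_of_ne hij, Function.update_of_ne hij, addFun_apply_ne _ _ _ him]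

lemma notPerm_conj_addPerm (j m : Fin n) (hmj : m ≠ j) (g) (hgj : Indep j g) :
    notPerm m * addPerm j g hgj * notPerm m =
      addPerm j (fun x => g (addFun m (fun _ => 1) x))
        (show Indep j (fun x => g (addFun m (fun _ => 1) x)) from fun x c => by
          simp only []
          rw [addFun_update_comm hmj, hgj]) := by
  apply Equiv.ext; intro x
  simp only [Equiv.Perm.mul_apply, notPerm, addPerm_coe]
  funext i
  rcases eq_or_ne i m with rfl | him
  · simp only [addFun_apply_ne _ _ _ hmj, addFun_apply_self, add_assoc, z2_add_self,
      add_zero]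
  · rw [addFun_apply_ne _ _ _ him]
    rcases eq_or_ne i j with rfl | hij
    · rw [addFun_apply_self, addFun_apply_self, addFun_apply_ne _ _ _ (Ne.symm hmj)]
    · rw [addFun_apply_ne _ _ _ hij, addFun_apply_ne _ _ _ him, addFun_apply_ne _ _ _ hij]

lemma sign_addPerm (j m : Fin n) (hmj : m ≠ j) (g) (hgj : Indep j g)
    (hgm : Indep m g) : Equiv.Perm.sign (addPerm j g hgj) = 1 := by
  set g₀ : Bvec n → ZMod 2 := fun x => g x * (x m + 1) with hg₀
  set g₁ : Bvec n → ZMod 2 := fun x => g x * x m with hg₁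
  have i₀ : Indep j g₀ := indep_mul hgj (indep_add (indep_coord hmj) (indep_const j 1))
  have i₁ : Indep j g₁ := indep_mul hgj (indep_coord hmj)
  have hsplit : addPerm j g hgj = addPerm j g₀ i₀ * addPerm j g₁ i₁ := by
    rw [addPerm_mul]
    apply addPerm_congr
    intro x
    have : ∀ a b : ZMod 2, a = a * (b + 1) + a * b := by decide
    exact this (g x) (x m)
  have hconj : addPerm j g₁ i₁ = notPerm m * addPerm j g₀ i₀ * notPerm m := by
    rw [notPerm_conj_addPerm j m hmj g₀ i₀]
    apply addPerm_congr
    intro x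
    simp only [hg₀, hg₁]
    rw [indep_addFun hgm, addFun_apply_self]
    have : ∀ a b : ZMod 2, a * b = a * (b + 1 + 1) := by decide
    exact this (g x) (x m)
  rw [hsplit, map_mul, hconj, map_mul, map_mul]
  generalize Equiv.Perm.sign (addPerm j g₀ i₀) = s
  generalize Equiv.Perm.sign (notPerm m) = t
  rcases Int.units_eq_one_or s with rfl | rfl <;>
    rcases Int.units_eq_one_or t with rfl | rfl <;> decide

end Aux3
section Aux4
open Equiv Equiv.Perm Finset

variable {n : ℕ}

/-- Generalized control function: 1 iff `x` agrees with `v` on `C`. -/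
def ctrlG (C : Finset (Fin n)) (v : Bvec n) : Bvec n → ZMod 2 :=
  fun x => ∏ i ∈ C, (x i + v i + 1)

lemma ctrlG_update {C : Finset (Fin n)} {a : Fin n} (ha : a ∉ C) (v : Bvec n)
    (x : Bvec n) (c : ZMod 2) : ctrlG C v (Function.update x a c) = ctrlG C v x := by
  unfold ctrlG
  refine Finset.prod_congr rfl fun i hi => ?_
  rw [Function.update_of_ne (fun h : i = a => ha (h ▸ hi)) c x]

lemma ctrlG_indep {C : Finset (Fin n)} {j : Fin n} (hj : j ∉ C) (v : Bvec n) :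
    Indep j (ctrlG C v) := fun x c => ctrlG_update hj v x c

/-- Generalized controlled-NOT permutation. -/
def ctrlPerm (C : Finset (Fin n)) (v : Bvec n) (j : Fin n) (hj : j ∉ C) :
    Equiv.Perm (Bvec n) :=
  addPerm j (ctrlG C v) (ctrlG_indep hj v)

lemma ctrlG_addFun {C : Finset (Fin n)} {a : Fin n} (ha : a ∉ C) (v : Bvec n) (g')
    (x : Bvec n) : ctrlG C v (addFun a g' x) = ctrlG C v x :=
  ctrlG_update ha v x _

/-- Base case: no controls is a NOT gate. -/
lemma ctrl_mem_zero (v : Bvec n) (j : Fin n) :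
    ctrlPerm ∅ v j (notMem_empty j) ∈ GG n := by
  have : ctrlPerm ∅ v j (notMem_empty j) = notPerm j := by
    apply addPerm_congr
    intro x
    simp [ctrlG]
  rw [this]; exact notPerm_mem j

/-- Base case: one control. -/
lemma ctrl_mem_one (v : Bvec n) (i j : Fin n) (hij : i ≠ j) (hj : j ∉ ({i} : Finset (Fin n))) :
    ctrlPerm {i} v j hj ∈ GG n := by
  have hprod : ∀ x : Bvec n, ctrlG {i} v x = x i + v i + 1 := by
    intro x; simp [ctrlG]
  rcases z2 (v i) with h0 | h1
  · -- negative control: CNOT then NOT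
    have : ctrlPerm {i} v j hj = cnotPerm i j hij * notPerm j := by
      rw [cnotPerm, notPerm, addPerm_mul]
      apply addPerm_congr
      intro x
      rw [hprod, h0, add_zero]
    rw [this]
    exact mul_mem (cnotPerm_mem i j hij) (notPerm_mem j)
  · have : ctrlPerm {i} v j hj = cnotPerm i j hij := by
      apply addPerm_congr
      intro x
      rw [hprod, h1]
      have : ∀ a : ZMod 2, a + 1 + 1 = a := by decide
      exact this (x i)
    rw [this]
    exact cnotPerm_mem i j hij

/-- Base case: two controls. -/
lemma ctrl_mem_two (v : Bvec n) (i₁ i₂ j : Fin n) (h12 : i₁ ≠ i₂) (h1j : i₁ ≠ j)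
    (h2j : i₂ ≠ j) (hj : j ∉ ({i₁, i₂} : Finset (Fin n))) :
    ctrlPerm {i₁, i₂} v j hj ∈ GG n := by
  have hprod : ∀ x : Bvec n, ctrlG {i₁, i₂} v x = (x i₁ + v i₁ + 1) * (x i₂ + v i₂ + 1) := by
    intro x; unfold ctrlG; rw [Finset.prod_pair h12]
  -- express as product: tof * cnot^(1+v₂) * cnot^(1+v₁) * not^((1+v₁)(1+v₂))
  rcases z2 (v i₁) with ha | ha <;> rcases z2 (v i₂) with hb | hb
  · -- v₁ = 0, v₂ = 0
    have : ctrlPerm {i₁, i₂} v j hj =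
        tofPerm i₁ i₂ j h1j h2j * (cnotPerm i₁ j h1j * (cnotPerm i₂ j h2j * notPerm j)) := by
      rw [tofPerm, cnotPerm, cnotPerm, notPerm, addPerm_mul, addPerm_mul, addPerm_mul]
      apply addPerm_congr
      intro x
      rw [hprod, ha, hb]
      have : ∀ a b : ZMod 2, (a + 0 + 1) * (b + 0 + 1) = a * b + (a + (b + 1)) := by decide
      exact this (x i₁) (x i₂)
    rw [this]
    exact mul_mem (tofPerm_mem _ _ _ h12 h1j h2j) (mul_mem (cnotPerm_mem _ _ h1j)
      (mul_mem (cnotPerm_mem _ _ h2j) (notPerm_mem j)))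
  · -- v₁ = 0, v₂ = 1
    have : ctrlPerm {i₁, i₂} v j hj = tofPerm i₁ i₂ j h1j h2j * cnotPerm i₂ j h2j := by
      rw [tofPerm, cnotPerm, addPerm_mul]
      apply addPerm_congr
      intro x
      rw [hprod, ha, hb]
      have : ∀ a b : ZMod 2, (a + 0 + 1) * (b + 1 + 1) = a * b + b := by decide
      exact this (x i₁) (x i₂)
    rw [this]
    exact mul_mem (tofPerm_mem _ _ _ h12 h1j h2j) (cnotPerm_mem _ _ h2j)
  · -- v₁ = 1, v₂ = 0
    have : ctrlPerm {i₁, i₂} v j hj = tofPerm i₁ i₂ j h1j h2j * cnotPerm i₁ j h1j := by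
      rw [tofPerm, cnotPerm, addPerm_mul]
      apply addPerm_congr
      intro x
      rw [hprod, ha, hb]
      have : ∀ a b : ZMod 2, (a + 1 + 1) * (b + 0 + 1) = a * b + a := by decide
      exact this (x i₁) (x i₂)
    rw [this]
    exact mul_mem (tofPerm_mem _ _ _ h12 h1j h2j) (cnotPerm_mem _ _ h1j)
  · -- v₁ = 1, v₂ = 1
    have : ctrlPerm {i₁, i₂} v j hj = tofPerm i₁ i₂ j h1j h2j := by
      apply addPerm_congr
      intro x
      rw [hprod, ha, hb]
      have : ∀ a b : ZMod 2, (a + 1 + 1) * (b + 1 + 1) = a * b := by decide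
      exact this (x i₁) (x i₂)
    rw [this]
    exact tofPerm_mem _ _ _ h12 h1j h2j

end Aux4
section Aux5
open Equiv Equiv.Perm Finset

variable {n : ℕ}

lemma ctrlPerm_congr_set {C D : Finset (Fin n)} (h : C = D) (v : Bvec n) (j : Fin n)
    (hC : j ∉ C) (hD : j ∉ D) : ctrlPerm C v j hC = ctrlPerm D v j hD := by
  subst h; rfl

/-- Borrowed-ancilla recursion for generalized controlled-NOTs. -/
lemma ctrl_rec (C : Finset (Fin n)) (v : Bvec n) (j k a : Fin n)
    (hkC : k ∉ C) (haC : a ∉ C) (hak : a ≠ k) (haj : a ≠ j) (hjC : j ∉ C) (hjk : j ≠ k)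
    (hjkC : j ∉ insert k C) (hka : j ∉ ({k, a} : Finset (Fin n))) :
    ctrlPerm (insert k C) v j hjkC =
      ctrlPerm {k, a} (Function.update v a 1) j hka * ctrlPerm C v a haC *
        ctrlPerm {k, a} (Function.update v a 1) j hka * ctrlPerm C v a haC := by
  have hV : ∀ y : Bvec n, ctrlG {k, a} (Function.update v a 1) y = (y k + v k + 1) * y a := by
    intro y
    unfold ctrlG
    rw [Finset.prod_pair (Ne.symm hak)]
    rw [Function.update_of_ne (Ne.symm hak), Function.update_self]
    have : ∀ b : ZMod 2, b + 1 + 1 = b := by decide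
    rw [this (y a)]
  apply Equiv.ext; intro x
  simp only [Equiv.Perm.mul_apply, ctrlPerm, addPerm_coe]
  set gV := ctrlG {k, a} (Function.update v a 1) with hgV
  set gU := ctrlG C v with hgU
  set P := gU x with hP
  set y1 := addFun a gU x with hy1
  set y2 := addFun j gV y1 with hy2
  set y3 := addFun a gU y2 with hy3
  show addFun j (ctrlG (insert k C) v) x = addFun j gV y3
  have hy1k : y1 k = x k := addFun_apply_ne _ _ _ (Ne.symm hak)
  have hy1a : y1 a = x a + P := addFun_apply_self _ _ _
  have hy1j : y1 j = x j := addFun_apply_ne _ _ _ haj.symm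
  have hgUy1 : gU y1 = P := by rw [hy1, hgU, ctrlG_addFun haC, hP]
  have hgUy2 : gU y2 = P := by rw [hy2, hgU, ctrlG_addFun hjC, ← hgU, hgUy1]
  have hy2a : y2 a = x a + P := by rw [hy2, addFun_apply_ne _ _ _ haj, hy1a]
  have hy2k : y2 k = x k := by rw [hy2, addFun_apply_ne _ _ _ hjk.symm, hy1k]
  have hy3a : y3 a = x a := by
    rw [hy3, addFun_apply_self, hgUy2, hy2a, add_assoc, z2_add_self, add_zero]
  have hy3k : y3 k = x k := by rw [hy3, addFun_apply_ne _ _ _ (Ne.symm hak), hy2k]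
  have hy3j : y3 j = y2 j := by rw [hy3, addFun_apply_ne _ _ _ (Ne.symm haj)]
  have hy2j : y2 j = x j + (x k + v k + 1) * (x a + P) := by
    rw [hy2, addFun_apply_self, hV, hy1k, hy1a, hy1j]
  funext i
  rcases eq_or_ne i j with rfl | hij
  · rw [addFun_apply_self, addFun_apply_self, hV, hy3k, hy3a, hy3j, hy2j]
    have hprod : ctrlG (insert k C) v x = (x k + v k + 1) * P := by
      unfold ctrlG
      rw [Finset.prod_insert hkC]
      rfl
    rw [hprod]
    have : ∀ t xa p xj : ZMod 2, xj + t * p = xj + t * (xa + p) + t * xa := by decide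
    exact this (x k + v k + 1) (x a) P (x i)
  · rw [addFun_apply_ne _ _ _ hij, addFun_apply_ne _ _ _ hij]
    rcases eq_or_ne i a with rfl | hia
    · rw [hy3a]
    · rw [hy3, addFun_apply_ne _ _ _ hia, hy2, addFun_apply_ne _ _ _ hij, hy1,
        addFun_apply_ne _ _ _ hia]

/-- All generalized controlled-NOTs with at most `n-2` controls are in the gate subgroup. -/
lemma ctrl_mem : ∀ (d : ℕ) (C : Finset (Fin n)) (v : Bvec n) (j : Fin n) (hj : j ∉ C),
    C.card ≤ d → C.card + 2 ≤ n → ctrlPerm C v j hj ∈ GG n := by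
  intro d
  induction d with
  | zero =>
    intro C v j hj hd _
    have : C = ∅ := Finset.card_eq_zero.mp (Nat.le_zero.mp hd)
    subst this
    exact ctrl_mem_zero v j
  | succ d ih =>
    intro C v j hj hd hn2
    by_cases h2 : C.card ≤ 2
    · -- base cases
      interval_cases h : C.card
      · obtain rfl := Finset.card_eq_zero.mp h
        exact ctrl_mem_zero v j
      · obtain ⟨i, rfl⟩ := Finset.card_eq_one.mp h
        exact ctrl_mem_one v i j (fun he => hj (he ▸ Finset.mem_singleton_self i)) hj
      · obtain ⟨i₁, i₂, h12, rfl⟩ := Finset.card_eq_two.mp h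
        have h1j : i₁ ≠ j := fun he => hj (he ▸ Finset.mem_insert_self i₁ {i₂})
        have h2j : i₂ ≠ j := fun he => hj (he ▸ Finset.mem_insert_of_mem (Finset.mem_singleton_self i₂))
        exact ctrl_mem_two v i₁ i₂ j h12 h1j h2j hj
    · -- recursive case
      push_neg at h2
      obtain ⟨k, hk⟩ := Finset.card_pos.mp (by omega : 0 < C.card)
      set C' := C.erase k with hC'
      have hCk : C = insert k C' := (Finset.insert_erase hk).symm
      have hkC' : k ∉ C' := Finset.notMem_erase k C
      have hcard' : C'.card = C.card - 1 := Finset.card_erase_of_mem hk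
      -- find a fresh wire a ∉ C ∪ {j}
      have hex : ∃ a : Fin n, a ∉ insert j C := by
        by_contra hco
        push_neg at hco
        have hsub : (Finset.univ : Finset (Fin n)) ⊆ insert j C := fun a _ => hco a
        have := Finset.card_le_card hsub
        rw [Finset.card_univ, Fintype.card_fin] at this
        have := Finset.card_insert_le j C
        omega
      obtain ⟨a, ha⟩ := hex
      have haC : a ∉ C := fun h => ha (Finset.mem_insert_of_mem h)
      have haj : a ≠ j := fun h => ha (h ▸ Finset.mem_insert_self j C)
      have hak : a ≠ k := fun h => haC (h ▸ hk)
      have hjC' : j ∉ C' := fun h => hj (Finset.erase_subset k C h)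
      have hjk : j ≠ k := fun h => hj (h ▸ hk)
      have haC' : a ∉ C' := fun h => haC (Finset.erase_subset k C h)
      have hjkC' : j ∉ insert k C' := by rw [← hCk]; exact hj
      have hka : j ∉ ({k, a} : Finset (Fin n)) := by
        simp only [Finset.mem_insert, Finset.mem_singleton]
        rintro (rfl | rfl)
        · exact hjk rfl
        · exact haj rfl
      have hrec := ctrl_rec C' v j k a hkC' haC' hak haj hjC' hjk hjkC' hka
      have hmemV : ctrlPerm {k, a} (Function.update v a 1) j hka ∈ GG n := by
        apply ctrl_mem_two _ k a j (Ne.symm hak) (Ne.symm hjk) haj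
      have hmemU : ctrlPerm C' v a haC' ∈ GG n := by
        apply ih C' v a haC' (by omega) (by omega)
      have : ctrlPerm C v j hj ∈ GG n := by
        rw [ctrlPerm_congr_set hCk v j hj hjkC', hrec]
        exact mul_mem (mul_mem (mul_mem hmemV hmemU) hmemV) hmemU
      exact this

end Aux5
section Aux6
open Equiv Equiv.Perm Finset

variable {n : ℕ}

lemma z2_ne : ∀ a b : ZMod 2, a ≠ b → a + b + 1 = 0 := by decide

lemma z2_cancel : ∀ a b : ZMod 2, a + (b + a) = b := by decide

lemma update_eq_add_single (y : Bvec n) (j : Fin n) (c : ZMod 2) :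
    Function.update y j (y j + c) = y + Pi.single j c := by
  funext i
  rcases eq_or_ne i j with rfl | hij
  · rw [Function.update_self, Pi.add_apply, Pi.single_eq_same]
  · rw [Function.update_of_ne hij, Pi.add_apply, Pi.single_eq_of_ne hij, add_zero]

lemma bv_ne_bv {j f : Fin n} (h : j ≠ f) : bv j ≠ bv f := by
  intro he
  have := congrFun he j
  rw [bv_same, bv_ne h] at this
  exact one_ne_zero this

lemma single_one_eq_bv (j : Fin n) : Pi.single j (1 : ZMod 2) = bv j := rfl

lemma mem_pair_compl {i j f : Fin n} :
    i ∈ ({j, f}ᶜ : Finset (Fin n)) ↔ i ≠ j ∧ i ≠ f := by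
  simp [Finset.mem_compl]

/-- The `(n-2)`-controlled NOT is a product of two transpositions. -/
lemma ctrl_eq_swap_mul_swap {j f : Fin n} (hjf : j ≠ f) (x : Bvec n)
    (hj : j ∉ ({j, f}ᶜ : Finset (Fin n))) :
    ctrlPerm ({j, f}ᶜ) x j hj =
      Equiv.swap x (x + bv j) * Equiv.swap (x + bv f) (x + bv f + bv j) := by
  have hbvj := bv_nonzero (n := n) j
  have hbvf := bv_nonzero (n := n) f
  have hbvjf : bv f + bv j ≠ 0 := bv_add_bv_nonzero (Ne.symm hjf)
  apply Equiv.ext; intro y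
  show addFun j (ctrlG ({j, f}ᶜ) x) y = _
  by_cases h : ∀ i, i ≠ j → i ≠ f → y i = x i
  · have hg : ctrlG ({j, f}ᶜ) x y = 1 := by
      apply Finset.prod_eq_one
      intro i hi
      obtain ⟨h1, h2⟩ := mem_pair_compl.mp hi
      rw [h i h1 h2, z2_add_self, zero_add]
    have hy : y = x + Pi.single j (y j + x j) + Pi.single f (y f + x f) := by
      funext i
      rcases eq_or_ne i j with rfl | hij
      · rw [Pi.add_apply, Pi.add_apply, Pi.single_eq_same, Pi.single_eq_of_ne hjf,
          add_zero, z2_cancel]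
      rcases eq_or_ne i f with rfl | hif
      · rw [Pi.add_apply, Pi.add_apply, Pi.single_eq_same,
          Pi.single_eq_of_ne (Ne.symm hjf), add_zero, z2_cancel]
      · rw [Pi.add_apply, Pi.add_apply, Pi.single_eq_of_ne hij,
          Pi.single_eq_of_ne hif, add_zero, add_zero, h i hij hif]
    have hLHS : addFun j (ctrlG ({j, f}ᶜ) x) y = y + bv j := by
      unfold addFun
      rw [hg, update_eq_add_single]
      rfl
    rw [hLHS]
    rcases z2 (y j + x j) with h1 | h1 <;> rcases z2 (y f + x f) with h2 | h2 <;>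
      rw [h1, h2] at hy <;>
      simp only [Pi.single_zero, add_zero, single_one_eq_bv] at hy <;> rw [hy]
    · -- y = x
      rw [Equiv.Perm.mul_apply,
        Equiv.swap_apply_of_ne_of_ne (ne_add_of_ne_zero hbvf)
          (by rw [add_assoc]; exact ne_add_of_ne_zero hbvjf),
        Equiv.swap_apply_left]
    · -- y = x + bv f
      have q1 : x + bv f + bv j ≠ x := by
        rw [add_assoc]; exact (ne_add_of_ne_zero hbvjf).symm
      have q2 : x + bv f + bv j ≠ x + bv j := by
        intro hh
        rw [add_assoc] at hh
        have := (add_right_inj x).mp hh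
        exact hbvf (add_eq_right.mp this)
      rw [Equiv.Perm.mul_apply, Equiv.swap_apply_left,
        Equiv.swap_apply_of_ne_of_ne q1 q2]
    · -- y = x + bv j
      have q1 : x + bv j ≠ x + bv f := by
        intro hh
        exact bv_ne_bv hjf ((add_right_inj x).mp hh)
      have q2 : x + bv j ≠ x + bv f + bv j := by
        intro hh
        rw [add_assoc] at hh
        have := (add_right_inj x).mp hh
        exact hbvf (right_eq_add.mp this)
      rw [Equiv.Perm.mul_apply, Equiv.swap_apply_of_ne_of_ne q1 q2,
        Equiv.swap_apply_right, add_assoc, bv_add_self, add_zero]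
    · -- y = x + bv j + bv f
      have hcomm : x + bv j + bv f = x + bv f + bv j := by
        rw [add_assoc, add_assoc, add_comm (bv j)]
      rw [hcomm]
      have q1 : x + bv f ≠ x := (ne_add_of_ne_zero hbvf).symm
      have q2 : x + bv f ≠ x + bv j := by
        intro hh
        exact bv_ne_bv (Ne.symm hjf) ((add_right_inj x).mp hh)
      rw [Equiv.Perm.mul_apply, Equiv.swap_apply_right,
        Equiv.swap_apply_of_ne_of_ne q1 q2, add_assoc, bv_add_self, add_zero]
  · push_neg at h
    obtain ⟨i, hij, hif, hne⟩ := h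
    have hg : ctrlG ({j, f}ᶜ) x y = 0 := by
      apply Finset.prod_eq_zero (mem_pair_compl.mpr ⟨hij, hif⟩)
      exact z2_ne _ _ hne
    unfold addFun
    rw [hg, add_zero, Function.update_eq_self]
    have hyne : ∀ u : Bvec n, u i = 0 → y ≠ x + u := by
      intro u hu hyp
      apply hne
      rw [hyp, Pi.add_apply, hu, add_zero]
    rw [Equiv.Perm.mul_apply,
      Equiv.swap_apply_of_ne_of_ne
        (hyne (bv f) (bv_ne hif))
        (by rw [add_assoc]
            exact hyne (bv f + bv j) (by rw [Pi.add_apply, bv_ne hif, bv_ne hij, add_zero])),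
      Equiv.swap_apply_of_ne_of_ne
        (by simpa using hyne 0 rfl)
        (hyne (bv j) (bv_ne hij))]

/-- The primitive double transposition is in the gate subgroup. -/
lemma prim_mem (hn : 4 ≤ n) {j f : Fin n} (hjf : j ≠ f) (x : Bvec n) :
    Equiv.swap x (x + bv j) * Equiv.swap (x + bv f) (x + bv f + bv j) ∈ GG n := by
  have hj : j ∉ ({j, f}ᶜ : Finset (Fin n)) := by
    rw [mem_pair_compl]
    rintro ⟨hh, -⟩
    exact hh rfl
  rw [← ctrl_eq_swap_mul_swap hjf x hj]
  apply ctrl_mem (({j, f}ᶜ : Finset (Fin n)).card) _ _ _ _ le_rfl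
  have hcard : ({j, f} : Finset (Fin n)).card = 2 := by
    rw [Finset.card_insert_of_notMem (by simpa using hjf), Finset.card_singleton]
  rw [Finset.card_compl, hcard, Fintype.card_fin]
  omega

end Aux6
section Aux7
open Equiv Equiv.Perm Finset

variable {n : ℕ}

lemma mul_invol_cancel {G : Type*} [Group G] {h : G} (hh : h * h = 1) (a : G) :
    a * h * h = a := by rw [mul_assoc, hh, mul_one]

/-- distinguished coordinate -/
def j0 (hn : 4 ≤ n) : Fin n := ⟨0, by omega⟩

/-- base transposition -/
def BP (hn : 4 ≤ n) : Equiv.Perm (Bvec n) := Equiv.swap 0 (bv (j0 hn))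

lemma BP_invol (hn : 4 ≤ n) : BP hn * BP hn = 1 := Equiv.swap_mul_self _ _

/-- `p` is in the distinguished coset class. -/
def InK (hn : 4 ≤ n) (p : Equiv.Perm (Bvec n)) : Prop := p * BP hn ∈ GG n

lemma InK_mul (hn : 4 ≤ n) {p q : Equiv.Perm (Bvec n)} (hp : InK hn p) (hq : InK hn q)
    (hq2 : q * q = 1) : p * q ∈ GG n := by
  have hBinv : (BP hn)⁻¹ = BP hn := inv_eq_iff_mul_eq_one.mpr (BP_invol hn)
  have hqinv : q⁻¹ = q := inv_eq_iff_mul_eq_one.mpr hq2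
  have hBq : BP hn * q ∈ GG n := by
    have : BP hn * q = (q * BP hn)⁻¹ := by rw [mul_inv_rev, hBinv, hqinv]
    rw [this]
    exact inv_mem hq
  have : p * q = (p * BP hn) * (BP hn * q) := by
    rw [mul_assoc, ← mul_assoc (BP hn), BP_invol, one_mul]
  rw [this]
  exact mul_mem hp hBq

lemma InK_transfer (hn : 4 ≤ n) {p q : Equiv.Perm (Bvec n)} (hpq : p * q ∈ GG n)
    (hq2 : q * q = 1) (hq : InK hn q) : InK hn p := by
  unfold InK
  have : p * BP hn = (p * q) * (q * BP hn) := by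
    rw [← mul_assoc, mul_invol_cancel hq2 p]
  rw [this]
  exact mul_mem hpq hq

lemma InK_of_conj (hn : 4 ≤ n) {h p : Equiv.Perm (Bvec n)} (hG : h ∈ GG n)
    (hh : h * h = 1) (hcb : InK hn (h * BP hn * h)) (hp : InK hn (h * p * h)) :
    InK hn p := by
  have hinv : h⁻¹ = h := inv_eq_iff_mul_eq_one.mpr hh
  have h1 : h * ((h * p * h) * BP hn) * h ∈ GG n :=
    mul_mem (mul_mem hG hp) hG
  have e1 : h * ((h * p * h) * BP hn) * h = p * (h * BP hn * h) := by
    simp only [← mul_assoc]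
    rw [hh, one_mul]
  rw [e1] at h1
  have hBB := BP_invol hn
  have hsq : (h * BP hn * h) * (h * BP hn * h) = 1 := by
    simp only [← mul_assoc]
    rw [mul_invol_cancel hh (h * BP hn), mul_invol_cancel hBB h, hh]
  exact InK_transfer hn h1 hsq hcb

lemma InK_conj_fwd (hn : 4 ≤ n) {h p : Equiv.Perm (Bvec n)} (hG : h ∈ GG n)
    (hh : h * h = 1) (hcb : InK hn (h * BP hn * h)) (hp : InK hn p) :
    InK hn (h * p * h) := by
  apply InK_of_conj hn hG hh hcb
  have : h * (h * p * h) * h = p := by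
    simp only [← mul_assoc]
    rw [hh, one_mul, mul_invol_cancel hh]
  rwa [this]

/-- weight of a vector -/
def wt (v : Bvec n) : ℕ := (Finset.univ.filter (fun i => v i = 1)).card

lemma wt_eq_zero {v : Bvec n} (h : wt v = 0) : v = 0 := by
  funext i
  have := Finset.card_eq_zero.mp h
  have hi : i ∉ Finset.univ.filter (fun i => v i = 1) := by rw [this]; exact notMem_empty i
  rw [Finset.mem_filter] at hi
  push_neg at hi
  rcases z2 (v i) with h0 | h1
  · exact h0
  · exact absurd h1 (hi (mem_univ i))

lemma exists_one_of_ne_zero {v : Bvec n} (h : v ≠ 0) : ∃ f, v f = 1 := by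
  by_contra hc
  push_neg at hc
  apply h
  funext i
  rcases z2 (v i) with h0 | h1
  · exact h0
  · exact absurd h1 (hc i)

lemma wt_add_bv {v : Bvec n} {f : Fin n} (hf : v f = 1) : wt (v + bv f) = wt v - 1 := by
  have hfil : Finset.univ.filter (fun i => (v + bv f) i = 1) =
      (Finset.univ.filter (fun i => v i = 1)).erase f := by
    ext i
    rw [Finset.mem_erase, Finset.mem_filter, Finset.mem_filter]
    constructor
    · rintro ⟨-, hi⟩
      rcases eq_or_ne i f with rfl | hif
      · rw [Pi.add_apply, hf, bv_same] at hi
        exact absurd hi (by decide)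
      · rw [Pi.add_apply, bv_ne hif, add_zero] at hi
        exact ⟨hif, mem_univ i, hi⟩
    · rintro ⟨hif, -, hi⟩
      refine ⟨mem_univ i, ?_⟩
      rw [Pi.add_apply, bv_ne hif, add_zero]
      exact hi
  unfold wt
  rw [hfil, Finset.card_erase_of_mem (Finset.mem_filter.mpr ⟨mem_univ f, hf⟩)]

lemma wt_pos_of_one {v : Bvec n} {f : Fin n} (hf : v f = 1) : 1 ≤ wt v :=
  Finset.card_pos.mpr ⟨f, Finset.mem_filter.mpr ⟨mem_univ f, hf⟩⟩

/-- within-direction chain link -/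
lemma link_dir (hn : 4 ≤ n) (j : Fin n) :
    ∀ (d : ℕ) (w : Bvec n), wt w ≤ d → w j = 0 →
      ∀ x : Bvec n, Equiv.swap x (x + bv j) * Equiv.swap (x + w) (x + w + bv j) ∈ GG n := by
  intro d
  induction d with
  | zero =>
    intro w hw _ x
    rw [wt_eq_zero (Nat.le_zero.mp hw), add_zero, Equiv.swap_mul_self]
    exact one_mem _
  | succ d ih =>
    intro w hw hwj x
    by_cases hw0 : w = 0
    · rw [hw0, add_zero, Equiv.swap_mul_self]
      exact one_mem _
    · obtain ⟨f, hf⟩ := exists_one_of_ne_zero hw0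
      have hjf : j ≠ f := by
        intro he
        rw [← he, hwj] at hf
        norm_num at hf
      set w' := w + bv f with hw'
      have hw'j : w' j = 0 := by
        rw [hw', Pi.add_apply, hwj, bv_ne hjf, add_zero]
      have hw'wt : wt w' ≤ d := by
        rw [hw', wt_add_bv hf]
        have := wt_pos_of_one hf
        omega
      have hxw : x + bv f + w' = x + w := by
        rw [hw', add_assoc, add_comm w (bv f), ← add_assoc (bv f), bv_add_self, zero_add]
      have key := mul_mem (prim_mem hn hjf x) (ih w' hw'wt hw'j (x + bv f))
      rw [hxw] at key
      have hmid : ∀ a b c : Equiv.Perm (Bvec n), b * b = 1 → (a * b) * (b * c) = a * c := by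
        intro a b c hb
        rw [mul_assoc, ← mul_assoc b b c, hb, one_mul]
      rwa [hmid _ _ _ (Equiv.swap_mul_self _ _)] at key

/-- all transpositions in the same basis direction are linked -/
lemma link_dir_all (hn : 4 ≤ n) (j : Fin n) (x y : Bvec n) :
    Equiv.swap x (x + bv j) * Equiv.swap y (y + bv j) ∈ GG n := by
  have key : ∀ z : Bvec n, z j = x j →
      Equiv.swap x (x + bv j) * Equiv.swap z (z + bv j) ∈ GG n := by
    intro z hz
    have hy : z = x + (x + z) := by rw [← add_assoc, bv_add_self, zero_add]
    have hwj : (x + z) j = 0 := by rw [Pi.add_apply, ← hz, z2_add_self]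
    have h2 := link_dir hn j (wt (x+z)) (x+z) le_rfl hwj x
    rwa [← hy] at h2
  rcases z2 (y j + x j) with h0 | h1
  · apply key y
    have : ∀ a b : ZMod 2, a + b = 0 → a = b := by decide
    exact this _ _ h0
  · have hyj : (y + bv j) j = x j := by
      rw [Pi.add_apply, bv_same]
      have : ∀ a b : ZMod 2, a + b = 1 → a + 1 = b := by decide
      exact this _ _ h1
    have hswap : Equiv.swap y (y + bv j) = Equiv.swap (y + bv j) ((y + bv j) + bv j) := by
      rw [add_assoc, bv_add_self, add_zero, Equiv.swap_comm]
    rw [hswap]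
    exact key (y + bv j) hyj

lemma InK_e0 (hn : 4 ≤ n) (x : Bvec n) : InK hn (Equiv.swap x (x + bv (j0 hn))) := by
  unfold InK BP
  have : (bv (j0 hn) : Bvec n) = 0 + bv (j0 hn) := by rw [zero_add]
  nth_rewrite 2 [this]
  exact link_dir_all hn (j0 hn) x 0

end Aux7
section Aux8
open Equiv Equiv.Perm Finset

variable {n : ℕ}

lemma conj_mul_conj {G : Type*} [Group G] {T : G} (hTT : T * T = 1) (s1 s2 : G) :
    (T * s1 * T) * (T * s2 * T) = T * (s1 * s2) * T := by
  simp only [← mul_assoc]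
  rw [mul_invol_cancel hTT (T * s1), mul_assoc T s1 s2]

lemma conj_mem {T s : Equiv.Perm (Bvec n)} (hT : T ∈ GG n) (hs : s ∈ GG n) :
    T * s * T ∈ GG n := mul_mem (mul_mem hT hs) hT

lemma tofPerm_sq (i₁ i₂ t : Fin n) (h1 : i₁ ≠ t) (h2 : i₂ ≠ t) :
    tofPerm i₁ i₂ t h1 h2 * tofPerm i₁ i₂ t h1 h2 = 1 := addPerm_invol _ _ _

lemma notPerm_sq (m : Fin n) : notPerm m * notPerm m = 1 := addPerm_invol _ _ _

/-- Conjugating a transposition `swap b (b+w)` by a Toffoli. -/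
lemma tof_conj_pair (i₁ i₂ t : Fin n) (h1 : i₁ ≠ t) (h2 : i₂ ≠ t) (b w : Bvec n) :
    tofPerm i₁ i₂ t h1 h2 * Equiv.swap b (b + w) * tofPerm i₁ i₂ t h1 h2 =
      Equiv.swap (tofPerm i₁ i₂ t h1 h2 b)
        (tofPerm i₁ i₂ t h1 h2 b +
          (w + Pi.single t (b i₁ * w i₂ + b i₂ * w i₁ + w i₁ * w i₂))) := by
  set T := tofPerm i₁ i₂ t h1 h2 with hT
  have hTinv : T⁻¹ = T := addPerm_inv _ _ _
  have e1 : T * Equiv.swap b (b + w) * T = Equiv.swap (T b) (T (b + w)) := by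
    nth_rewrite 2 [← hTinv]
    exact (Equiv.swap_apply_apply T b (b + w)).symm
  rw [e1]
  congr 1
  have hTb : T b = b + Pi.single t (b i₁ * b i₂) := addPerm_apply_eq_add _ _ _ b
  have hTbw : T (b + w) = b + w + Pi.single t ((b+w) i₁ * (b+w) i₂) :=
    addPerm_apply_eq_add _ _ _ (b + w)
  rw [hTb, hTbw]
  have hq : (b+w) i₁ * (b+w) i₂ =
      b i₁ * b i₂ + (b i₁ * w i₂ + b i₂ * w i₁ + w i₁ * w i₂) := by
    rw [Pi.add_apply, Pi.add_apply]
    have : ∀ b1 b2 w1 w2 : ZMod 2,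
        (b1 + w1) * (b2 + w2) = b1 * b2 + (b1 * w2 + b2 * w1 + w1 * w2) := by decide
    exact this _ _ _ _
  rw [hq, Pi.single_add]
  abel

/-- Conjugating a transposition by a NOT. -/
lemma not_conj_pair (m : Fin n) (b w : Bvec n) :
    notPerm m * Equiv.swap b (b + w) * notPerm m =
      Equiv.swap (b + bv m) (b + bv m + w) := by
  have hNinv : (notPerm m)⁻¹ = notPerm m := addPerm_inv _ _ _
  have e1 : notPerm m * Equiv.swap b (b + w) * notPerm m =
      Equiv.swap (notPerm m b) (notPerm m (b + w)) := by
    nth_rewrite 2 [← hNinv]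
    exact (Equiv.swap_apply_apply _ b (b + w)).symm
  rw [e1]
  have h1 : notPerm m b = b + bv m := addPerm_apply_eq_add _ _ _ b
  have h2 : notPerm m (b + w) = b + w + bv m := addPerm_apply_eq_add _ _ _ (b + w)
  rw [h1, h2]
  congr 1
  abel

lemma exists_avoid (hn : 4 ≤ n) (a b c : Fin n) : ∃ m, m ≠ a ∧ m ≠ b ∧ m ≠ c := by
  by_contra hc
  push_neg at hc
  have hsub : (Finset.univ : Finset (Fin n)) ⊆ {a, b, c} := by
    intro m _
    rcases eq_or_ne m a with rfl | hma
    · exact Finset.mem_insert_self _ _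
    rcases eq_or_ne m b with rfl | hmb
    · exact Finset.mem_insert_of_mem (Finset.mem_insert_self _ _)
    have := hc m hma hmb
    subst this
    exact Finset.mem_insert_of_mem (Finset.mem_insert_of_mem (Finset.mem_singleton_self _))
  have h1 := Finset.card_le_card hsub
  rw [Finset.card_univ, Fintype.card_fin] at h1
  have h2 : ({a, b, c} : Finset (Fin n)).card ≤ 3 := by
    apply le_trans (Finset.card_insert_le _ _)
    have := Finset.card_insert_le b ({c} : Finset (Fin n))
    simp only [Finset.card_singleton] at this ⊢
    omega
  omega

/-- The main induction step: knowing all `(v + e_j)`-pairs are in the class,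
conclude all `v`-pairs are. -/
lemma step_lemma (hn : 4 ≤ n) (v : Bvec n) (j i₁ i₂ : Fin n)
    (hvj : v j = 1) (hvi2 : v i₂ = 1) (h2j : i₂ ≠ j) (h1j : i₁ ≠ j) (h12 : i₁ ≠ i₂)
    (IH : ∀ z : Bvec n, InK hn (Equiv.swap z (z + (v + bv j)))) :
    ∀ b : Bvec n, InK hn (Equiv.swap b (b + v)) := by
  set u := v + bv j with hu
  set T := tofPerm i₁ i₂ j h1j h2j with hT
  have hTG : T ∈ GG n := tofPerm_mem _ _ _ h12 h1j h2j
  have hTT : T * T = 1 := tofPerm_sq _ _ _ _ _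
  have hui1 : u i₁ = v i₁ := by rw [hu, Pi.add_apply, bv_ne h1j, add_zero]
  have hui2 : u i₂ = 1 := by rw [hu, Pi.add_apply, bv_ne h2j, add_zero, hvi2]
  have main : ∀ b : Bvec n, b i₁ + b i₂ * v i₁ + v i₁ = 1 →
      InK hn (Equiv.swap b (b + v)) := by
    intro b hε
    set c := b + bv i₁ with hc
    have hci1 : c i₁ = b i₁ + 1 := by rw [hc, Pi.add_apply, bv_same]
    have hci2 : c i₂ = b i₂ := by rw [hc, Pi.add_apply, bv_ne (Ne.symm h12), add_zero]
    -- conjugate the v-pair at b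
    have hconj1 : T * Equiv.swap b (b + v) * T = Equiv.swap (T b) (T b + u) := by
      rw [tof_conj_pair]
      congr 2
      rw [hvi2]
      have hδ : b i₁ * 1 + b i₂ * v i₁ + v i₁ * 1 = 1 := by
        have : ∀ b1 b2 v1 : ZMod 2, b1 + b2 * v1 + v1 = 1 →
            b1 * 1 + b2 * v1 + v1 * 1 = 1 := by decide
        exact this _ _ _ hε
      rw [hδ, single_one_eq_bv, hu]
    -- conjugate the u-pair at c
    have hconj2 : T * Equiv.swap c (c + u) * T = Equiv.swap (T c) (T c + u) := by
      rw [tof_conj_pair]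
      congr 2
      rw [hci1, hci2, hui1, hui2]
      have hδ : (b i₁ + 1) * 1 + b i₂ * v i₁ + v i₁ * 1 = 0 := by
        have : ∀ b1 b2 v1 : ZMod 2, b1 + b2 * v1 + v1 = 1 →
            (b1 + 1) * 1 + b2 * v1 + v1 * 1 = 0 := by decide
        exact this _ _ _ hε
      rw [hδ, Pi.single_zero, add_zero]
    have hAB : Equiv.swap (T b) (T b + u) * Equiv.swap (T c) (T c + u) ∈ GG n :=
      InK_mul hn (IH (T b)) (IH (T c)) (Equiv.swap_mul_self _ _)
    have hprod : Equiv.swap b (b + v) * Equiv.swap c (c + u) ∈ GG n := by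
      have e : T * (Equiv.swap b (b + v) * Equiv.swap c (c + u)) * T =
          Equiv.swap (T b) (T b + u) * Equiv.swap (T c) (T c + u) := by
        rw [← hconj1, ← hconj2, conj_mul_conj hTT]
      have hmem : T * (Equiv.swap b (b+v) * Equiv.swap c (c+u)) * T ∈ GG n := by
        rw [e]; exact hAB
      have := conj_mem hTG hmem
      have e2 : T * (T * (Equiv.swap b (b+v) * Equiv.swap c (c+u)) * T) * T =
          Equiv.swap b (b+v) * Equiv.swap c (c+u) := by
        simp only [← mul_assoc]
        rw [hTT, one_mul, mul_invol_cancel hTT]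
      rwa [e2] at this
    exact InK_transfer hn hprod (Equiv.swap_mul_self _ _) (IH c)
  intro b
  by_cases hε : b i₁ + b i₂ * v i₁ + v i₁ = 1
  · exact main b hε
  · have hε0 : b i₁ + b i₂ * v i₁ + v i₁ = 0 := by
      rcases z2 (b i₁ + b i₂ * v i₁ + v i₁) with h | h
      · exact h
      · exact absurd h hε
    set c := b + bv i₁ with hc
    have hε' : c i₁ + c i₂ * v i₁ + v i₁ = 1 := by
      rw [hc, Pi.add_apply, Pi.add_apply, bv_same, bv_ne (Ne.symm h12), add_zero]
      have : ∀ b1 b2 v1 : ZMod 2, b1 + b2 * v1 + v1 = 0 →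
          b1 + 1 + b2 * v1 + v1 = 1 := by decide
      exact this _ _ _ hε0
    have hm := main c hε'
    -- conjugate back by NOT i₁
    apply InK_of_conj hn (notPerm_mem i₁) (notPerm_sq i₁)
    · -- the conjugated base point is in the class
      show InK hn (notPerm i₁ * BP hn * notPerm i₁)
      unfold BP
      have h0 : (0 : Bvec n) + bv (j0 hn) = bv (j0 hn) := by rw [zero_add]
      rw [show Equiv.swap (0 : Bvec n) (bv (j0 hn)) = Equiv.swap 0 (0 + bv (j0 hn)) by
        rw [h0]]
      rw [not_conj_pair, zero_add]
      exact InK_e0 hn (bv i₁)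
    · rw [not_conj_pair]
      rw [show b + bv i₁ + v = c + v by rw [hc]]
      rw [show b + bv i₁ = c by rw [hc]]
      exact hm

end Aux8
section Aux9
open Equiv Equiv.Perm Finset

variable {n : ℕ}

lemma z2_eq_of_add : ∀ a b : ZMod 2, a + b = 0 → a = b := by decide

lemma InK_w2 (hn : 4 ≤ n) (j : Fin n) (hj : j ≠ j0 hn) :
    ∀ b : Bvec n, InK hn (Equiv.swap b (b + (bv (j0 hn) + bv j))) := by
  obtain ⟨i₁, h1j, h10, -⟩ := exists_avoid hn j (j0 hn) (j0 hn)
  set v : Bvec n := bv (j0 hn) + bv j with hv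
  have hvj : v j = 1 := by
    rw [hv, Pi.add_apply, bv_ne hj, bv_same, zero_add]
  have hvi2 : v (j0 hn) = 1 := by
    rw [hv, Pi.add_apply, bv_same, bv_ne (Ne.symm hj), add_zero]
  have hvbv : v + bv j = bv (j0 hn) := by
    rw [hv, add_assoc, bv_add_self, add_zero]
  apply step_lemma hn v j i₁ (j0 hn) hvj hvi2 (Ne.symm hj) h1j h10
  intro z
  rw [hvbv]
  exact InK_e0 hn z

lemma InK_w1_ne (hn : 4 ≤ n) (j : Fin n) (hj : j ≠ j0 hn) (x : Bvec n) :
    InK hn (Equiv.swap x (x + bv j)) := by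
  obtain ⟨i₁, h1j, h10, -⟩ := exists_avoid hn j (j0 hn) (j0 hn)
  have w2 := InK_w2 hn j hj
  set v : Bvec n := bv (j0 hn) + bv j with hv
  set T := tofPerm i₁ j (j0 hn) h10 hj with hT
  have hTG : T ∈ GG n := tofPerm_mem _ _ _ (fun h => h1j h) h10 hj
  have hTT : T * T = 1 := tofPerm_sq _ _ _ _ _
  have hvj0 : v (j0 hn) = 1 := by rw [hv, Pi.add_apply, bv_same, bv_ne (Ne.symm hj), add_zero]
  have hvj' : v j = 1 := by rw [hv, Pi.add_apply, bv_ne hj, bv_same, zero_add]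
  have hvi1 : v i₁ = 0 := by rw [hv, Pi.add_apply, bv_ne h10, bv_ne h1j, add_zero]
  have hvbv : v + bv (j0 hn) = bv j := by
    have : v + bv (j0 hn) = bv j + (bv (j0 hn) + bv (j0 hn)) := by rw [hv]; abel
    rw [this, bv_add_self, add_zero]
  have hTapp : ∀ y : Bvec n, T y = y + Pi.single (j0 hn) (y i₁ * y j) :=
    fun y => addPerm_apply_eq_add _ _ _ y
  have hTi1 : ∀ y : Bvec n, T y i₁ = y i₁ := by
    intro y
    rw [hTapp, Pi.add_apply, Pi.single_eq_of_ne h10, add_zero]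
  have hTT' : ∀ y : Bvec n, T (T y) = y := by
    intro y
    have : (T * T) y = y := by rw [hTT]; rfl
    exact this
  have main : ∀ x : Bvec n, x i₁ = 1 → InK hn (Equiv.swap x (x + bv j)) := by
    intro x hx1
    set b := T x with hb
    have hbi1 : b i₁ = 1 := by rw [hb, hTi1, hx1]
    set c := b + bv i₁ with hc
    have hci1 : c i₁ = 0 := by
      rw [hc, Pi.add_apply, bv_same, hbi1]
      decide
    have hTbx : tofPerm i₁ j (j0 hn) h10 hj b = x := hTT' x
    have hconj1 : T * Equiv.swap b (b + v) * T = Equiv.swap x (x + bv j) := by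
      rw [tof_conj_pair]
      have hδ : b i₁ * v j + b j * v i₁ + v i₁ * v j = 1 := by
        rw [hbi1, hvj', hvi1]
        have : ∀ t : ZMod 2, 1 * 1 + t * 0 + 0 * 1 = 1 := by decide
        exact this _
      rw [hδ, single_one_eq_bv, hvbv, hTbx]
    have hconj2 : T * Equiv.swap c (c + v) * T = Equiv.swap (T c) (T c + v) := by
      rw [tof_conj_pair]
      have hδ : c i₁ * v j + c j * v i₁ + v i₁ * v j = 0 := by
        rw [hci1, hvi1]
        have : ∀ t s : ZMod 2, 0 * t + s * 0 + 0 * t = 0 := by decide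
        exact this _ _
      rw [hδ, Pi.single_zero, add_zero]
    have hPZ : Equiv.swap b (b + v) * Equiv.swap c (c + v) ∈ GG n :=
      InK_mul hn (w2 b) (w2 c) (Equiv.swap_mul_self _ _)
    have hconj : Equiv.swap x (x + bv j) * Equiv.swap (T c) (T c + v) ∈ GG n := by
      have e : T * (Equiv.swap b (b + v) * Equiv.swap c (c + v)) * T =
          Equiv.swap x (x + bv j) * Equiv.swap (T c) (T c + v) := by
        rw [← conj_mul_conj hTT, hconj1, hconj2]
      rw [← e]
      exact conj_mem hTG hPZ
    exact InK_transfer hn hconj (Equiv.swap_mul_self _ _) (w2 (T c))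
  by_cases hx1 : x i₁ = 1
  · exact main x hx1
  · have hx0 : x i₁ = 0 := by
      rcases z2 (x i₁) with h | h
      · exact h
      · exact absurd h hx1
    have hx' : (x + bv i₁) i₁ = 1 := by
      rw [Pi.add_apply, bv_same, hx0, zero_add]
    have hm := main (x + bv i₁) hx'
    have hlink := link_dir_all hn j x (x + bv i₁)
    exact InK_transfer hn hlink (Equiv.swap_mul_self _ _) hm

lemma InK_w1 (hn : 4 ≤ n) (j : Fin n) (x : Bvec n) :
    InK hn (Equiv.swap x (x + bv j)) := by
  rcases eq_or_ne j (j0 hn) with rfl | hj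
  · exact InK_e0 hn x
  · exact InK_w1_ne hn j hj x

lemma InK_pair_all (hn : 4 ≤ n) :
    ∀ (d : ℕ) (v : Bvec n), wt v ≤ d → v ≠ 0 → ∀ b : Bvec n,
      InK hn (Equiv.swap b (b + v)) := by
  intro d
  induction d with
  | zero =>
    intro v hd hv0
    exact absurd (wt_eq_zero (Nat.le_zero.mp hd)) hv0
  | succ d ih =>
    intro v hd hv0 b
    obtain ⟨j, hj⟩ := exists_one_of_ne_zero hv0
    by_cases h1 : wt v = 1
    · -- v = bv j
      have hv : v = bv j := by
        obtain ⟨a, ha⟩ := Finset.card_eq_one.mp h1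
        have hja : j = a := by
          have : j ∈ Finset.univ.filter (fun i => v i = 1) :=
            Finset.mem_filter.mpr ⟨mem_univ j, hj⟩
          rw [ha, Finset.mem_singleton] at this
          exact this
        subst hja
        funext i
        rcases eq_or_ne i j with rfl | hij
        · rw [hj, bv_same]
        · rw [bv_ne hij]
          rcases z2 (v i) with h | h
          · exact h
          · exfalso
            have : i ∈ Finset.univ.filter (fun i' => v i' = 1) :=
              Finset.mem_filter.mpr ⟨mem_univ i, h⟩
            rw [ha, Finset.mem_singleton] at this
            exact hij this
      rw [hv]
      exact InK_w1 hn j b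
    · -- wt v ≥ 2
      have h2 : 1 < wt v := by
        have := wt_pos_of_one hj
        omega
      obtain ⟨a, haf, b', hbf, hab⟩ := Finset.one_lt_card.mp h2
      have hva : v a = 1 := (Finset.mem_filter.mp haf).2
      have hvb : v b' = 1 := (Finset.mem_filter.mp hbf).2
      obtain ⟨i₁, hi1a, hi1b, -⟩ := exists_avoid hn a b' b'
      refine step_lemma hn v a i₁ b' hva hvb (Ne.symm hab) hi1a hi1b ?_ b
      intro z
      have hwt : wt (v + bv a) ≤ d := by
        rw [wt_add_bv hva]
        omega
      have hne : v + bv a ≠ 0 := by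
        intro h0
        have : (v + bv a) b' = 0 := by rw [h0]; rfl
        rw [Pi.add_apply, bv_ne (Ne.symm hab), add_zero, hvb] at this
        exact one_ne_zero this
      exact ih (v + bv a) hwt hne z

lemma InK_swap (hn : 4 ≤ n) (x y : Bvec n) (hxy : x ≠ y) :
    InK hn (Equiv.swap x y) := by
  set v := x + y with hv
  have hv0 : v ≠ 0 := by
    intro h0
    exact hxy (funext fun i => z2_eq_of_add _ _ (congrFun h0 i))
  have hyx : y = x + v := by rw [hv, ← add_assoc, bv_add_self, zero_add]
  rw [hyx]
  exact InK_pair_all hn (wt v) v le_rfl hv0 x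

lemma prod_swaps_mem (hn : 4 ≤ n) :
    ∀ (k : ℕ) (l : List (Equiv.Perm (Bvec n))), (∀ g ∈ l, Equiv.Perm.IsSwap g) →
      l.length = k + k → l.prod ∈ GG n := by
  intro k
  induction k with
  | zero =>
    intro l _ hl
    rw [List.length_eq_zero_iff.mp hl, List.prod_nil]
    exact one_mem _
  | succ k ih =>
    intro l hsw hlen
    match l with
    | [] => exact absurd hlen (by simp)
    | [a] => exact absurd hlen (by simp; omega)
    | a :: b :: t =>
      rw [List.prod_cons, List.prod_cons, ← mul_assoc]
      apply mul_mem
      · obtain ⟨x, y, hxy, ha⟩ := hsw a (by simp)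
        obtain ⟨z, w, hzw, hb⟩ := hsw b (by simp)
        rw [ha, hb]
        exact InK_mul hn (InK_swap hn x y hxy) (InK_swap hn z w hzw)
          (Equiv.swap_mul_self _ _)
      · apply ih t
        · intro g hg
          exact hsw g (by simp [hg])
        · simp only [List.length_cons] at hlen
          omega

/-- Every even permutation is generated by the gates. -/
lemma even_mem (hn : 4 ≤ n) (σ : Equiv.Perm (Bvec n)) (hσ : Equiv.Perm.sign σ = 1) :
    σ ∈ GG n := by
  obtain ⟨l, hlp, hls⟩ := (Equiv.Perm.truncSwapFactors σ).out
  have hev : Even l.length := by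
    have h1 := Equiv.Perm.sign_prod_list_swap hls
    rw [hlp, hσ] at h1
    exact (neg_one_pow_eq_one_iff_even (by decide : (-1 : ℤˣ) ≠ 1)).mp h1.symm
  obtain ⟨k, hk⟩ := hev
  rw [← hlp]
  exact prod_swaps_mem hn k l hls hk

end Aux9
section Aux10
open Equiv Equiv.Perm Finset

variable {n : ℕ}

lemma indep_sym2 {j : Fin n} (c : Sym2 (Fin n)) (hj : j ∉ c) :
    Indep j (fun x : Bvec n =>
      Sym2.lift ⟨fun a b => x a * x b, fun _ _ => mul_comm _ _⟩ c) := by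
  induction c using Sym2.ind with
  | _ a b =>
    have ha : a ≠ j := fun h => hj (h ▸ Sym2.mem_mk_left a b)
    have hb : b ≠ j := fun h => hj (h ▸ Sym2.mem_mk_right a b)
    intro x cc
    simp only [Sym2.lift_mk]
    rw [Function.update_of_ne ha, Function.update_of_ne hb]

lemma gate_apply_invol (g : RGate n) : ∀ x, g.apply (g.apply x) = x := by
  cases g with
  | NOT j => exact fun x => addFun_invol (indep_one j) x
  | CNOT i j h => exact fun x => addFun_invol (indep_coord h) x
  | TOF c j hc hj => exact fun x => addFun_invol (indep_sym2 c hj) x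

/-- Permutation of a gate. -/
def gatePerm (g : RGate n) : Equiv.Perm (Bvec n) :=
  ⟨g.apply, g.apply, gate_apply_invol g, gate_apply_invol g⟩

lemma gatePerm_coe (g : RGate n) : ⇑(gatePerm g) = g.apply := rfl

lemma gatePerm_mem (g : RGate n) : gatePerm g ∈ GG n :=
  Subgroup.subset_closure ⟨g, rfl⟩

lemma gatePerm_sign (hn : 4 ≤ n) (g : RGate n) : Equiv.Perm.sign (gatePerm g) = 1 := by
  cases g with
  | NOT j =>
    have he : gatePerm (RGate.NOT j) = addPerm j (fun _ => 1) (indep_one j) :=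
      Equiv.ext fun x => rfl
    obtain ⟨m, hmj, -, -⟩ := exists_avoid hn j j j
    rw [he]
    exact sign_addPerm j m hmj _ _ (indep_const m 1)
  | CNOT i j h =>
    have he : gatePerm (RGate.CNOT i j h) = addPerm j (fun x => x i) (indep_coord h) :=
      Equiv.ext fun x => rfl
    obtain ⟨m, hmj, hmi, -⟩ := exists_avoid hn j i i
    rw [he]
    exact sign_addPerm j m hmj _ _ (indep_coord (Ne.symm hmi))
  | TOF c j hc hj =>
    induction c using Sym2.ind with
    | _ a b =>
      have ha : a ≠ j := fun h => hj (h ▸ Sym2.mem_mk_left a b)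
      have hb : b ≠ j := fun h => hj (h ▸ Sym2.mem_mk_right a b)
      have he : gatePerm (RGate.TOF s(a, b) j hc hj) =
          addPerm j (fun x => x a * x b)
            (indep_mul (indep_coord ha) (indep_coord hb)) := by
        apply Equiv.ext
        intro x
        show (RGate.TOF s(a, b) j hc hj).apply x = addFun j (fun y => y a * y b) x
        simp only [RGate.apply, Sym2.lift_mk]
        rfl
      obtain ⟨m, hmj, hma, hmb⟩ := exists_avoid hn j a b
      rw [he]
      exact sign_addPerm j m hmj _ _
        (indep_mul (indep_coord (Ne.symm hma)) (indep_coord (Ne.symm hmb)))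

lemma eval_eq_prod (S : Circuit n) : ∀ x : Bvec n,
    Circuit.eval S x = ((S.map gatePerm).reverse.prod : Equiv.Perm (Bvec n)) x := by
  induction S with
  | nil => intro x; simp [Circuit.eval]
  | cons g t ih =>
    intro x
    have h1 : Circuit.eval (g :: t) x = Circuit.eval t (g.apply x) := rfl
    rw [h1, ih]
    have h2 : ((g :: t).map gatePerm).reverse.prod =
        (t.map gatePerm).reverse.prod * gatePerm g := by
      rw [List.map_cons, List.reverse_cons, List.prod_append, List.prod_singleton]
    rw [h2]
    rfl

lemma prod_reverse_sign (hn : 4 ≤ n) (S : Circuit n) :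
    Equiv.Perm.sign ((S.map gatePerm).reverse.prod) = 1 := by
  rw [map_list_prod]
  apply List.prod_eq_one
  intro u hu
  rw [List.mem_map] at hu
  obtain ⟨τ, hτ, rfl⟩ := hu
  rw [List.mem_reverse, List.mem_map] at hτ
  obtain ⟨g, -, rfl⟩ := hτ
  exact gatePerm_sign hn g

lemma prod_reverse_mem (S : Circuit n) : (S.map gatePerm).reverse.prod ∈ GG n := by
  apply list_prod_mem
  intro u hu
  rw [List.mem_reverse, List.mem_map] at hu
  obtain ⟨g, -, rfl⟩ := hu
  exact gatePerm_mem g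

lemma eval_reverse_eval (S : Circuit n) : ∀ x : Bvec n,
    Circuit.eval S.reverse (Circuit.eval S x) = x := by
  induction S with
  | nil => intro x; rfl
  | cons g t ih =>
    intro x
    have h1 : Circuit.eval (g :: t) x = Circuit.eval t (g.apply x) := rfl
    have h2 : ∀ y, Circuit.eval (g :: t).reverse y = g.apply (Circuit.eval t.reverse y) := by
      intro y
      rw [List.reverse_cons]
      unfold Circuit.eval
      rw [List.foldl_append]
      rfl
    rw [h1, h2, ih (g.apply x), gate_apply_invol]

lemma exists_circuit {σ : Equiv.Perm (Bvec n)} (hσ : σ ∈ GG n) :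
    ∃ S : Circuit n, Defines S ⇑σ := by
  refine Subgroup.closure_induction ?_ ?_ ?_ ?_ hσ
  · rintro x ⟨g, hg⟩
    refine ⟨[g], fun y => ?_⟩
    show g.apply y = x y
    rw [hg]
  · exact ⟨[], fun y => rfl⟩
  · rintro x y - - ⟨Sx, hSx⟩ ⟨Sy, hSy⟩
    refine ⟨Sy ++ Sx, fun z => ?_⟩
    show Circuit.eval (Sy ++ Sx) z = x (y z)
    unfold Circuit.eval
    rw [List.foldl_append]
    show Circuit.eval Sx (Circuit.eval Sy z) = x (y z)
    rw [hSy z, hSx (y z)]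
  · rintro x - ⟨S, hS⟩
    refine ⟨S.reverse, fun z => ?_⟩
    have h1 : z = Circuit.eval S (x⁻¹ z) := by
      rw [hS (x⁻¹ z)]
      exact (Equiv.apply_symm_apply x z).symm
    calc Circuit.eval S.reverse z
        = Circuit.eval S.reverse (Circuit.eval S (x⁻¹ z)) := by rw [← h1]
      _ = x⁻¹ z := eval_reverse_eval S (x⁻¹ z)

end Aux10


/-- For `n > 3`, `F(n,0)` is exactly the set of even permutations of `Z₂ⁿ`;
equivalently, the subgroup generated by the gates of `Ω²_n` is the alternating
group on `Z₂ⁿ`. -/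
theorem fset0_eq_even_perms (n : ℕ) (hn : 3 < n) :
    FSet0 n = {f | ∃ σ : Equiv.Perm (Bvec n), ⇑σ = f ∧ Equiv.Perm.sign σ = 1} ∧
    Subgroup.closure {σ : Equiv.Perm (Bvec n) | ∃ g : RGate n, ⇑σ = g.apply} =
      alternatingGroup (Bvec n) := by
  have hn4 : 4 ≤ n := hn
  have hGG : Subgroup.closure {σ : Equiv.Perm (Bvec n) | ∃ g : RGate n, ⇑σ = g.apply} =
      GG n := rfl
  have hpart2 : GG n = alternatingGroup (Bvec n) := by
    apply le_antisymm
    · rw [GG, Subgroup.closure_le]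
      rintro σ ⟨g, hg⟩
      have : σ = gatePerm g := Equiv.coe_fn_injective (hg.trans (gatePerm_coe g).symm)
      rw [SetLike.mem_coe, Equiv.Perm.mem_alternatingGroup, this]
      exact gatePerm_sign hn4 g
    · intro σ hσ
      exact even_mem hn4 σ (Equiv.Perm.mem_alternatingGroup.mp hσ)
  constructor
  · ext f
    constructor
    · rintro ⟨S, hS⟩
      refine ⟨(S.map gatePerm).reverse.prod, ?_, prod_reverse_sign hn4 S⟩
      funext x
      rw [← eval_eq_prod S x, hS x]
    · rintro ⟨σ, hcoe, hsign⟩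
      have hmem : σ ∈ GG n := even_mem hn4 σ hsign
      obtain ⟨S, hS⟩ := exists_circuit hmem
      exact ⟨S, fun x => by rw [hS x, hcoe]⟩
  · rw [hGG, hpart2]
end

section
/- For all integers n ≥ 1 and q ≥ n, every map f: Z₂ⁿ → Z₂ⁿ is realizable by some reversible circuit with n+q wires using q additional inputs; that is, F(n,q) is the set of all maps Z₂ⁿ → Z₂ⁿ. -/
namespace RevAux
variable {m : ℕ}

lemma eval_append (S T : Circuit m) (v : Bvec m) :
    Circuit.eval (S ++ T) v = Circuit.eval T (Circuit.eval S v) :=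
  List.foldl_append

def AddsTo (t : Fin m) (g : Bvec m → ZMod 2) (C : Circuit m) : Prop :=
  ∀ v, C.eval v = Function.update v t (v t + g v)

def Indep (t : Fin m) (g : Bvec m → ZMod 2) : Prop :=
  ∀ v z, g (Function.update v t z) = g v

lemma AddsTo.congr {t : Fin m} {g g' : Bvec m → ZMod 2} {C : Circuit m}
    (h : AddsTo t g C) (hg : ∀ v, g v = g' v) : AddsTo t g' C := by
  intro v; rw [h v, hg]

lemma AddsTo.append {t : Fin m} {g h : Bvec m → ZMod 2} {C D : Circuit m}
    (hC : AddsTo t g C) (hD : AddsTo t h D) (hh : Indep t h) :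
    AddsTo t (fun v => g v + h v) (C ++ D) := by
  intro v
  rw [eval_append, hC v, hD _, Function.update_idem]
  congr 1
  rw [Function.update_self, hh]
  ring_nf

lemma indep_coord (t i : Fin m) (h : i ≠ t) : Indep t (fun v => v i) :=
  fun _ _ => Function.update_of_ne h _ _

lemma addsTo_NOT (t : Fin m) : AddsTo t (fun _ => 1) [RGate.NOT t] := fun _ => rfl

lemma addsTo_CNOT (i t : Fin m) (h : i ≠ t) :
    AddsTo t (fun v => v i) [RGate.CNOT i t h] := fun _ => rfl

lemma addsTo_TOF (i j t : Fin m) (hij : i ≠ j) (hit : i ≠ t) (hjt : j ≠ t) :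
    AddsTo t (fun v => v i * v j)
      [RGate.TOF s(i, j) t (by simp [Sym2.mk_isDiag_iff, hij])
        (by simp only [Sym2.mem_iff, not_or]; exact ⟨fun e => hit e.symm, fun e => hjt e.symm⟩)] := by
  intro v
  simp [Circuit.eval, RGate.apply]

def litProd (lits : List (Fin m × ZMod 2)) (v : Bvec m) : ZMod 2 :=
  (lits.map fun p => v p.1 + p.2).prod

lemma litProd_update (lits : List (Fin m × ZMod 2)) (a : Fin m)
    (h : a ∉ lits.map Prod.fst) (v : Bvec m) (z : ZMod 2) :
    litProd lits (Function.update v a z) = litProd lits v := by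
  unfold litProd
  congr 1
  apply List.map_congr_left
  intro p hp
  have hpa : p.1 ≠ a := fun e => h (e ▸ List.mem_map_of_mem (f := Prod.fst) hp)
  rw [Function.update_of_ne hpa]

lemma indep_litProd (lits : List (Fin m × ZMod 2)) (t : Fin m)
    (h : t ∉ lits.map Prod.fst) : Indep t (litProd lits) :=
  fun v z => litProd_update lits t h v z

lemma two_cases (b : ZMod 2) : b = 0 ∨ b = 1 := by revert b; decide

-- single literal
lemma gadget_one (i t : Fin m) (h : i ≠ t) (b : ZMod 2) :
    ∃ C : Circuit m, AddsTo t (fun v => v i + b) C := by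
  rcases two_cases b with hb | hb <;> subst hb
  · exact ⟨_, (addsTo_CNOT i t h).congr (fun v => by ring)⟩
  · exact ⟨_, ((addsTo_CNOT i t h).append (addsTo_NOT t) (fun _ _ => rfl)).congr
      (fun v => rfl)⟩

-- two literals
lemma gadget_two (i j t : Fin m) (hij : i ≠ j) (hit : i ≠ t) (hjt : j ≠ t)
    (bi bj : ZMod 2) :
    ∃ C : Circuit m, AddsTo t (fun v => (v i + bi) * (v j + bj)) C := by
  have key : ∀ a b c d : ZMod 2, (a + c) * (b + d) = a * b + (c * b + (d * a + c * d)) := by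
    decide
  obtain ⟨C1, h1⟩ : ∃ C : Circuit m, AddsTo t (fun v => bi * v j) C := by
    rcases two_cases bi with hb | hb <;> subst hb
    · exact ⟨[], fun v => by simp [Circuit.eval]⟩
    · exact ⟨_, (addsTo_CNOT j t hjt).congr (fun v => by ring)⟩
  obtain ⟨C2, h2⟩ : ∃ C : Circuit m, AddsTo t (fun v => bj * v i) C := by
    rcases two_cases bj with hb | hb <;> subst hb
    · exact ⟨[], fun v => by simp [Circuit.eval]⟩
    · exact ⟨_, (addsTo_CNOT i t hit).congr (fun v => by ring)⟩
  obtain ⟨C3, h3⟩ : ∃ C : Circuit m, AddsTo t (fun _ => bi * bj) C := by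
    rcases two_cases (bi * bj) with hb | hb
    · exact ⟨[], fun v => by rw [hb]; simp [Circuit.eval]⟩
    · exact ⟨_, (addsTo_NOT t).congr (fun v => by rw [hb])⟩
  refine ⟨_, ((((addsTo_TOF i j t hij hit hjt).append h1
      (fun v z => by simp only [Function.update_of_ne hjt])).append h2
      (fun v z => by simp only [Function.update_of_ne hit])).append h3
      (fun _ _ => rfl)).congr (fun v => by rw [key (v i) (v j) bi bj]; ring)⟩

lemma char2 : ∀ a b : ZMod 2, a + b + b = a := by decide

lemma gadget_main : ∀ (k : ℕ) (lits : List (Fin m × ZMod 2)) (t : Fin m) (ds : List (Fin m)),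
    lits.length = k → lits ≠ [] →
    (lits.map Prod.fst ++ t :: ds).Nodup → lits.length ≤ ds.length + 2 →
    ∃ C : Circuit m, AddsTo t (litProd lits) C := by
  intro k
  induction k using Nat.strong_induction_on with
  | _ k IH =>
  intro lits t ds hlen hne hnd hle
  match lits, hne with
  | [(i, bi)], _ =>
    have hit : i ≠ t := by
      simp only [List.map_cons, List.map_nil, List.cons_append, List.nil_append,
        List.nodup_cons, List.mem_cons] at hnd
      exact fun e => hnd.1 (Or.inl e)
    obtain ⟨C, hC⟩ := gadget_one i t hit bi
    exact ⟨C, hC.congr (fun v => by simp [litProd])⟩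
  | [(i, bi), (j, bj)], _ =>
    have h3 : i ≠ j ∧ i ≠ t ∧ j ≠ t := by
      simp only [List.map_cons, List.map_nil, List.cons_append, List.nil_append,
        List.nodup_cons, List.mem_cons] at hnd
      exact ⟨fun e => hnd.1 (Or.inl e), fun e => hnd.1 (Or.inr (Or.inl e)),
        fun e => hnd.2.1 (Or.inl e)⟩
    obtain ⟨C, hC⟩ := gadget_two i j t h3.1 h3.2.1 h3.2.2 bi bj
    exact ⟨C, hC.congr (fun v => by simp [litProd])⟩
  | (i, bi) :: p2 :: p3 :: rest, _ =>
    set rest' : List (Fin m × ZMod 2) := p2 :: p3 :: rest with hrest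
    rcases ds with _ | ⟨d, ds'⟩
    · simp only [hrest, List.length_cons, List.length_nil] at hle; omega
    simp only [List.map_cons, List.cons_append, List.nodup_cons, List.mem_append,
      List.mem_cons, not_or] at hnd
    obtain ⟨⟨hi_rest, hit, hi_ds⟩, hnd2⟩ := hnd
    obtain ⟨hid, hi_ds'⟩ := hi_ds
    have hnadd := List.nodup_append.1 hnd2
    have ht_rest : t ∉ rest'.map Prod.fst :=
      fun h => hnadd.2.2 _ h _ List.mem_cons_self rfl
    have hd_rest : d ∉ rest'.map Prod.fst :=
      fun h => hnadd.2.2 _ h _ (List.mem_cons_of_mem _ List.mem_cons_self) rfl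
    have htd : t ≠ d := by
      have := List.nodup_cons.1 hnadd.2.1
      exact fun e => this.1 (e ▸ List.mem_cons_self)
    have hklt : rest'.length < k := by
      have : rest'.length + 1 = k := by rw [← hlen]; rfl
      omega
    have hndA : (rest'.map Prod.fst ++ d :: ds').Nodup :=
      ((List.sublist_cons_self t (d :: ds')).append_left (rest'.map Prod.fst)).nodup hnd2
    obtain ⟨A, hA⟩ := IH rest'.length hklt rest' d ds' rfl (by simp [hrest]) hndA
      (by simp only [hrest, List.length_cons] at hle ⊢; omega)
    obtain ⟨B, hB⟩ := IH rest'.length hklt rest' t (d :: ds') rfl (by simp [hrest]) hnd2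
      (by simp only [hrest, List.length_cons] at hle ⊢; omega)
    obtain ⟨T, hT⟩ : ∃ T : Circuit m, AddsTo t (fun v => v i * v d) T :=
      ⟨_, addsTo_TOF i d t hid hit htd.symm⟩
    set P := litProd rest' with hP
    have hPt : ∀ v z, P (Function.update v t z) = P v :=
      fun v z => litProd_update _ _ ht_rest v z
    have hPd : ∀ v z, P (Function.update v d z) = P v :=
      fun v z => litProd_update _ _ hd_rest v z
    have hC0 : AddsTo t (fun v => v i * P v) (A ++ T ++ A ++ T) := by
      intro v
      rw [eval_append, eval_append, eval_append, hA v]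
      have s2 : Circuit.eval T (Function.update v d (v d + P v)) =
          Function.update (Function.update v d (v d + P v)) t
            (v t + v i * (v d + P v)) := by
        rw [hT]
        congr 1
        simp only [Function.update_self, Function.update_of_ne htd, Function.update_of_ne hid]
      rw [s2]
      set X := v t + v i * (v d + P v) with hX
      have s3 : Circuit.eval A
          (Function.update (Function.update v d (v d + P v)) t X) =
          Function.update v t X := by
        rw [hA]
        rw [hPt, hPd]
        rw [Function.update_of_ne htd.symm, Function.update_self]
        rw [char2]
        rw [Function.update_comm htd.symm, Function.update_idem]
        have hvd : v d = (Function.update v t X) d := (Function.update_of_ne htd.symm _ _).symm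
        rw [hvd, Function.update_eq_self]
      rw [s3, hT, Function.update_idem]
      simp only [Function.update_self, Function.update_of_ne hit, Function.update_of_ne htd.symm]
      have h4 : ∀ a b c p : ZMod 2, a + b * (c + p) + b * c = a + b * p := by decide
      exact congrArg (Function.update v t) (h4 _ _ _ _)
    have hlit : ∀ v : Bvec m, litProd ((i, bi) :: rest') v = (v i + bi) * P v := by
      intro v; simp [litProd, hP]
    rcases two_cases bi with hb | hb <;> subst hb
    · exact ⟨_, hC0.congr (fun v => by rw [hlit]; ring)⟩
    · refine ⟨_, (hC0.append hB hPt).congr (fun v => by rw [hlit]; ring)⟩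

end RevAux

namespace RevAux

variable {n q : ℕ}

def inpw (n q : ℕ) : Fin n → Fin (n + q) :=
  fun i => ⟨i.1, lt_of_lt_of_le i.2 (Nat.le_add_right n q)⟩

def outw (n q : ℕ) (hq : n ≤ q) : Fin n → Fin (n + q) :=
  fun j => ⟨n + j.1, by have := j.2; omega⟩

lemma outw_injective (hq : n ≤ q) : Function.Injective (outw n q hq) := by
  intro a b h
  have := congrArg Fin.val h
  simp only [outw] at this
  exact Fin.ext (by omega)

def lits (n q : ℕ) (a : Bvec n) : List (Fin (n + q) × ZMod 2) :=
  (List.finRange n).map fun i => (inpw n q i, a i + 1)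

lemma lits_fst (a : Bvec n) :
    (lits n q a).map Prod.fst = (List.finRange n).map (inpw n q) := by
  simp [lits, List.map_map, Function.comp]

lemma mem_lits_fst_lt {a : Bvec n} {w : Fin (n + q)}
    (h : w ∈ (lits n q a).map Prod.fst) : (w : ℕ) < n := by
  rw [lits_fst] at h
  obtain ⟨i, -, rfl⟩ := List.mem_map.1 h
  exact i.2

lemma outw_not_mem_lits_fst (hq : n ≤ q) (a : Bvec n) (j : Fin n) :
    outw n q hq j ∉ (lits n q a).map Prod.fst := by
  intro h
  have := mem_lits_fst_lt h
  simp only [outw] at this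
  omega

lemma litProd_lits (a x : Bvec n) (v : Bvec (n + q)) (hv : ∀ i, v (inpw n q i) = x i) :
    litProd (lits n q a) v = if x = a then 1 else 0 := by
  unfold litProd lits
  rw [List.map_map]
  by_cases hxa : x = a
  · subst hxa
    rw [if_pos rfl]
    apply List.prod_eq_one
    intro y hy
    obtain ⟨i, -, rfl⟩ := List.mem_map.1 hy
    simp only [Function.comp_apply, hv]
    have h1 : ∀ b : ZMod 2, b + (b + 1) = 1 := by decide
    exact h1 _
  · rw [if_neg hxa]
    have : ∃ i, x i ≠ a i := by
      by_contra hcon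
      push_neg at hcon
      exact hxa (funext hcon)
    obtain ⟨i, hi⟩ := this
    apply List.prod_eq_zero
    apply List.mem_map.2
    refine ⟨i, List.mem_finRange i, ?_⟩
    simp only [Function.comp_apply, hv]
    have : ∀ b c : ZMod 2, b ≠ c → b + (c + 1) = 0 := by decide
    exact this _ _ hi

lemma gadget_out (f : Bvec n → Bvec n) (hn : 1 ≤ n) (hq : n ≤ q) (a : Bvec n) (j : Fin n) :
    ∃ C : Circuit (n + q), ∀ v, Circuit.eval C v =
      Function.update v (outw n q hq j)
        (v (outw n q hq j) + f a j * litProd (lits n q a) v) := by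
  rcases two_cases (f a j) with hb | hb <;> rw [hb]
  · exact ⟨[], fun v => by simp [Circuit.eval]⟩
  · set t := outw n q hq j with ht
    set ds := ((List.finRange n).map (outw n q hq)).erase t with hds
    have houtnd : ((List.finRange n).map (outw n q hq)).Nodup :=
      (List.nodup_finRange n).map (outw_injective hq)
    have htmem : t ∈ (List.finRange n).map (outw n q hq) :=
      List.mem_map.2 ⟨j, List.mem_finRange j, rfl⟩
    have hlen : (lits n q a).length = n := by simp [lits]
    have hnd : ((lits n q a).map Prod.fst ++ t :: ds).Nodup := by
      rw [List.nodup_append]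
      refine ⟨?_, ?_, ?_⟩
      · rw [lits_fst]
        exact (List.nodup_finRange n).map (by
          intro x y hxy
          have := congrArg Fin.val hxy
          simp only [inpw] at this
          exact Fin.ext this)
      · exact List.nodup_cons.2 ⟨houtnd.not_mem_erase, houtnd.erase t⟩
      · intro w hw w' hw' hww'
        subst hww'
        have h1 : (w : ℕ) < n := mem_lits_fst_lt hw
        have h2 : n ≤ (w : ℕ) := by
          rcases List.mem_cons.1 hw' with rfl | hw''
          · simp [ht, outw]
          · obtain ⟨i, -, rfl⟩ := List.mem_map.1 (List.mem_of_mem_erase hw'')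
            simp [outw]
        omega
    have hdslen : ds.length = n - 1 := by
      rw [hds, List.length_erase_of_mem htmem]
      simp
    obtain ⟨C, hC⟩ := gadget_main (m := n + q) (lits n q a).length (lits n q a) t ds rfl
      (by intro h; rw [h] at hlen; simp at hlen; omega) hnd (by omega)
    exact ⟨C, fun v => by rw [hC v, one_mul]⟩

lemma bigstep (f : Bvec n → Bvec n) (hn : 1 ≤ n) (hq : n ≤ q)
    (L : List (Bvec n × Fin n)) :
    ∃ S : Circuit (n + q), ∀ (v : Bvec (n + q)) (w : Fin (n + q)),
      Circuit.eval S v w = v w + (L.map fun p =>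
        if w = outw n q hq p.2 then f p.1 p.2 * litProd (lits n q p.1) v else 0).sum := by
  induction L with
  | nil => exact ⟨[], fun v w => by simp [Circuit.eval]⟩
  | cons p L' ih =>
    obtain ⟨S', hS'⟩ := ih
    obtain ⟨C, hC⟩ := gadget_out f hn hq p.1 p.2
    refine ⟨C ++ S', fun v w => ?_⟩
    rw [eval_append, hC v, hS', List.map_cons, List.sum_cons]
    have hsum : ∀ v1 : Bvec (n + q),
        (∀ aa : Bvec n, litProd (lits n q aa) v1 = litProd (lits n q aa) v) →
        (L'.map fun p' =>
          if w = outw n q hq p'.2 then f p'.1 p'.2 * litProd (lits n q p'.1) v1 else 0) =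
        (L'.map fun p' =>
          if w = outw n q hq p'.2 then f p'.1 p'.2 * litProd (lits n q p'.1) v else 0) :=
      fun v1 h1 => List.map_congr_left fun p' _ => by rw [h1]
    rw [hsum _ (fun aa => litProd_update _ _ (outw_not_mem_lits_fst hq aa p.2) _ _)]
    by_cases hw : w = outw n q hq p.2
    · rw [hw, Function.update_self, if_pos rfl]
      ring
    · rw [Function.update_of_ne hw, if_neg hw]
      ring

lemma main_realize (n q : ℕ) (hn : 1 ≤ n) (hq : n ≤ q) (f : Bvec n → Bvec n) :
    ∃ S : Circuit (n + q), Realizes n q S f := by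
  obtain ⟨S, hS⟩ := bigstep f hn hq (Finset.univ : Finset (Bvec n × Fin n)).toList
  refine ⟨S, outw n q hq, outw_injective hq, fun x j => ?_⟩
  rw [hS]
  have h0 : extendInput n q x (outw n q hq j) = 0 := by
    unfold extendInput outw
    rw [dif_neg (by simp)]
  have hin : ∀ i, extendInput n q x (inpw n q i) = x i := by
    intro i
    unfold extendInput inpw
    rw [dif_pos i.2]
  rw [h0, zero_add, Finset.sum_map_toList]
  have : ∀ p : Bvec n × Fin n,
      (if outw n q hq j = outw n q hq p.2 then
        f p.1 p.2 * litProd (lits n q p.1) (extendInput n q x) else 0) =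
      (if j = p.2 then (if x = p.1 then f p.1 p.2 else 0) else 0) := by
    intro p
    rw [litProd_lits p.1 x _ hin]
    simp only [(outw_injective hq).eq_iff]
    by_cases h1 : j = p.2 <;> by_cases h2 : x = p.1 <;> simp [h1, h2]
  rw [Finset.sum_congr rfl (fun p _ => this p)]
  rw [Fintype.sum_prod_type]
  simp [Finset.sum_ite_eq]

end RevAux


/-- For `q ≥ n` every map `Z₂ⁿ → Z₂ⁿ` is realizable: `F(n,q)` is the set of all maps. -/
theorem fset_eq_univ (n q : ℕ) (hn : 1 ≤ n) (hq : n ≤ q) :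
    (∀ f : Bvec n → Bvec n, ∃ S : Circuit (n + q), Realizes n q S f) ∧
    FSet n q = Set.univ := by
  refine ⟨fun f => RevAux.main_realize n q hn hq f, ?_⟩
  apply Set.eq_univ_of_forall
  intro f
  exact RevAux.main_realize n q hn hq f
end
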